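/- Let 0 < ε < 1. Then for every real t, log(1 − ε + ε·e^t) ≥ log(2 − ε) + (t + log ε)/(2 − ε). -/

import Mathlib

/-- Tangent-line (convexity) bound: log(1 - ε + ε e^t) ≥ log(2 - ε) + (t + log ε)/(2 - ε). -/
theorem stmt_6 (ε : ℝ) (hε0 : 0 < ε) (hε1 : ε < 1) (t : ℝ) :
    Real.log (1 - ε + ε * Real.exp t) ≥
      Real.log (2 - ε) + (t + Real.log ε) / (2 - ε) := by
  have h2 : (0:ℝ) < 2 - ε := by linarith
  set u := (t + Real.log ε) / (2 - ε) with hu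
  have huu : (2 - ε) * u = t + Real.log ε := by
    rw [hu]; field_simp [ne_of_gt h2]
  have hexp : Real.exp ((2 - ε) * u) = ε * Real.exp t := by
    rw [huu, Real.exp_add, Real.exp_log hε0]; ring
  have key : (2 - ε) * Real.exp u ≤ 1 - ε + ε * Real.exp t := by
    rw [← hexp]
    have a := Real.add_one_le_exp ((1 - ε) * u)
    have b := Real.add_one_le_exp (-u)
    have h1 : Real.exp ((2 - ε) * u) = Real.exp ((1 - ε) * u) * Real.exp u := by
      rw [← Real.exp_add]; ring_nf
    have h2' : Real.exp (-u) * Real.exp u = 1 := by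
      rw [← Real.exp_add]; simp
    nlinarith [Real.exp_pos u, Real.exp_pos (-u), Real.exp_pos ((1 - ε) * u)]
  have hpos : (0:ℝ) < (2 - ε) * Real.exp u := by positivity
  calc Real.log (1 - ε + ε * Real.exp t)
      ≥ Real.log ((2 - ε) * Real.exp u) := Real.log_le_log hpos key
    _ = Real.log (2 - ε) + u := by rw [Real.log_mul (ne_of_gt h2) (Real.exp_ne_zero u), Real.log_exp]
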